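/- Let K, J ≥ 1 and let Y ∈ ℝ^{K×J} be entrywise nonnegative with every column summing to 1, rank(Y) = K, and Y satisfying the SSC. Let Q ∈ ℝ^{K×K} be any matrix such that Ŷ = Q·Y is entrywise nonnegative and every column of Ŷ sums to 1. Then |det(Q)| ≤ 1, and if |det(Q)| = 1 then Q is a permutation matrix. -/

import Mathlib

open Matrix BigOperators

/-- Euclidean norm of a real vector. -/
noncomputable def l2norm {m : Type*} [Fintype m] (x : m → ℝ) : ℝ :=
  Real.sqrt (∑ i, (x i) ^ 2)

/-- `P` is a permutation matrix. -/
def IsPermMatrix {K : ℕ} (P : Matrix (Fin K) (Fin K) ℝ) : Prop :=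
  ∃ σ : Equiv.Perm (Fin K), ∀ i j, P i j = if σ i = j then 1 else 0

/-- The conic hull of the columns of `H`. -/
def coneOf {K : ℕ} {J : Type*} [Fintype J] (H : Matrix (Fin K) J ℝ) : Set (Fin K → ℝ) :=
  {x | ∃ θ : J → ℝ, (∀ j, 0 ≤ θ j) ∧ x = H.mulVec θ}

/-- The second-order cone `C = {x : √(K-1) ‖x‖₂ ≤ ∑ᵢ xᵢ}`. -/
def socC (K : ℕ) : Set (Fin K → ℝ) :=
  {x | Real.sqrt ((K : ℝ) - 1) * l2norm x ≤ ∑ i, x i}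

/-- The sufficiently scattered condition. -/
def SSC {K : ℕ} {J : Type*} [Fintype J] (H : Matrix (Fin K) J ℝ) : Prop :=
  socC K ⊆ coneOf H ∧
  ∀ Q : Matrix (Fin K) (Fin K) ℝ, Qᵀ * Q = 1 → ¬ IsPermMatrix Q → ¬ (coneOf H ⊆ coneOf Q)

/-- AM–GM type bound via `x ≤ exp (x - 1)`, with equality case. -/
lemma aux_prod_le_one {n : ℕ} (x : Fin n → ℝ) (h0 : ∀ i, 0 ≤ x i)
    (hs : ∑ i, x i ≤ n) : (∏ i, x i ≤ 1) ∧ (∏ i, x i = 1 → ∀ i, x i = 1) := by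
  have hle : ∀ i : Fin n, x i ≤ Real.exp (x i - 1) := fun i => by
    have := Real.add_one_le_exp (x i - 1); linarith
  have hexp : ∏ i : Fin n, Real.exp (x i - 1) = Real.exp (∑ i, x i - n) := by
    rw [← Real.exp_sum]
    congr 1
    rw [Finset.sum_sub_distrib]
    simp
  have hone : Real.exp (∑ i, x i - (n : ℝ)) ≤ 1 := Real.exp_le_one_iff.2 (by linarith)
  have hprod : ∏ i, x i ≤ ∏ i, Real.exp (x i - 1) :=
    Finset.prod_le_prod (fun i _ => h0 i) (fun i _ => hle i)
  refine ⟨by rw [hexp] at hprod; linarith, ?_⟩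
  intro hp i
  by_contra hne
  have hstrict : x i < Real.exp (x i - 1) := by
    have := Real.add_one_lt_exp (x := x i - 1) (by intro h; exact hne (by linarith))
    linarith
  have hpos : ∀ j : Fin n, 0 < x j := by
    intro j
    rcases (h0 j).lt_or_eq with h | h
    · exact h
    · exfalso
      rw [Finset.prod_eq_zero (Finset.mem_univ j) h.symm] at hp
      norm_num at hp
  have hlt : ∏ j, x j < ∏ j, Real.exp (x j - 1) :=
    Finset.prod_lt_prod (fun j _ => hpos j) (fun j _ => hle j)
      ⟨i, Finset.mem_univ i, hstrict⟩
  rw [hexp] at hlt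
  linarith [hp ▸ hlt]

/-- The all-ones vector lies in the second-order cone. -/
lemma one_mem_socC {K : ℕ} (hK : 1 ≤ K) : (fun _ => (1:ℝ)) ∈ socC K := by
  have hK1 : (1:ℝ) ≤ (K:ℝ) := by exact_mod_cast hK
  show Real.sqrt ((K : ℝ) - 1) * l2norm (fun _ : Fin K => (1:ℝ)) ≤ ∑ _i : Fin K, (1:ℝ)
  have h1 : l2norm (fun _ : Fin K => (1:ℝ)) = Real.sqrt K := by
    unfold l2norm; simp
  rw [h1, ← Real.sqrt_mul (by linarith)]
  rw [Finset.sum_const, Finset.card_univ, Fintype.card_fin, nsmul_eq_mul, mul_one]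
  calc Real.sqrt (((K:ℝ) - 1) * K) ≤ Real.sqrt ((K:ℝ) * K) := by
        apply Real.sqrt_le_sqrt; nlinarith
    _ = K := by rw [Real.sqrt_mul_self (by linarith)]

/-- A vector with nonnegative inner product against everything in `socC K`
satisfies `‖q‖² ≤ (∑ q)²`. -/
lemma aux_row {K : ℕ} (hK : 1 ≤ K) (q : Fin K → ℝ)
    (hq : ∀ y ∈ socC K, 0 ≤ ∑ k, q k * y k) :
    0 ≤ ∑ k, q k ∧ ∑ k, (q k)^2 ≤ (∑ k, q k)^2 := by
  have hK1 : (1:ℝ) ≤ (K:ℝ) := by exact_mod_cast hK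
  have hKpos : (0:ℝ) < K := by linarith
  have hs : 0 ≤ ∑ k, q k := by
    have := hq _ (one_mem_socC hK)
    simpa using this
  refine ⟨hs, ?_⟩
  set s : ℝ := ∑ k, q k with hs_def
  set α : ℝ := s / K with hα_def
  have hsumu : ∑ k, (q k - α) = 0 := by
    rw [Finset.sum_sub_distrib, Finset.sum_const, Finset.card_univ, Fintype.card_fin,
      nsmul_eq_mul, hα_def]
    field_simp
    linarith
  set n2 : ℝ := ∑ k, (q k - α)^2 with hn2_def
  have hsq : ∑ k, (q k)^2 = n2 + s^2 / K := by
    have h1 : ∀ k : Fin K, (q k)^2 = (q k - α)^2 + 2*α*(q k - α) + α^2 := by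
      intro k; ring
    rw [Finset.sum_congr rfl (fun k _ => h1 k), Finset.sum_add_distrib, Finset.sum_add_distrib,
      ← Finset.mul_sum, hsumu, hn2_def]
    simp only [Finset.sum_const, Finset.card_univ, Fintype.card_fin, nsmul_eq_mul, mul_zero,
      add_zero]
    congr 1; rw [hα_def]; field_simp
  have hn2nonneg : 0 ≤ n2 := Finset.sum_nonneg (fun k _ => sq_nonneg _)
  suffices h : n2 ≤ s^2 - s^2/K by rw [hsq]; linarith
  rcases eq_or_lt_of_le hn2nonneg with h0 | hn2pos
  · rw [← h0]
    have : s^2/K ≤ s^2 := by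
      rw [div_le_iff₀ hKpos]; nlinarith [sq_nonneg s]
    linarith
  · have hK2 : (2:ℝ) ≤ (K:ℝ) := by
      have : 2 ≤ K := by
        by_contra hlt
        push_neg at hlt
        have hKe : K = 1 := by omega
        subst hKe
        have : α = s := by rw [hα_def]; norm_num
        have h1 : n2 = 0 := by
          rw [hn2_def, this]
          rw [Fin.sum_univ_one]
          have : q 0 = s := by rw [hs_def, Fin.sum_univ_one]
          rw [this]; ring
        linarith
      exact_mod_cast this
    have hKm1 : (0:ℝ) < (K:ℝ) - 1 := by linarith
    set t : ℝ := Real.sqrt ((K:ℝ)/((K:ℝ)-1)) with ht_def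
    have ht2 : t^2 = (K:ℝ)/((K:ℝ)-1) := Real.sq_sqrt (by positivity)
    have htpos : 0 < t := Real.sqrt_pos.2 (by positivity)
    set nn : ℝ := Real.sqrt n2 with hnn_def
    have hnn2 : nn^2 = n2 := Real.sq_sqrt hn2nonneg
    have hnnpos : 0 < nn := Real.sqrt_pos.2 hn2pos
    set c : ℝ := t / nn with hc_def
    set y : Fin K → ℝ := fun k => 1 - c * (q k - α) with hy_def
    have hysum : ∑ k, y k = K := by
      simp only [hy_def, Finset.sum_sub_distrib, ← Finset.mul_sum, hsumu, mul_zero, sub_zero,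
        Finset.sum_const, Finset.card_univ, Fintype.card_fin, nsmul_eq_mul, mul_one]
    have hysq : ∑ k, (y k)^2 = (K:ℝ) + t^2 := by
      have h1 : ∀ k : Fin K, (y k)^2 = 1 - 2*c*(q k - α) + c^2 * (q k - α)^2 := by
        intro k; simp only [hy_def]; ring
      rw [Finset.sum_congr rfl (fun k _ => h1 k)]
      rw [Finset.sum_add_distrib, Finset.sum_sub_distrib, ← Finset.mul_sum, hsumu, ← Finset.mul_sum,
        ← hn2_def]
      have hc2 : c^2 * n2 = t^2 := by
        rw [hc_def, div_pow, hnn2]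
        field_simp
      simp only [Finset.sum_const, Finset.card_univ, Fintype.card_fin, nsmul_eq_mul, mul_one,
        mul_zero, sub_zero, hc2]
    have hymem : y ∈ socC K := by
      show Real.sqrt ((K:ℝ) - 1) * l2norm y ≤ ∑ k, y k
      rw [hysum]
      unfold l2norm
      rw [hysq, ← Real.sqrt_mul (by linarith)]
      have : ((K:ℝ) - 1) * ((K:ℝ) + t^2) = (K:ℝ)*(K:ℝ) := by
        rw [ht2]; field_simp; ring
      rw [this, Real.sqrt_mul_self (by linarith)]
    have hqy := hq y hymem
    have hquad : ∑ k, q k * (q k - α) = n2 := by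
      have h1 : ∀ k : Fin K, q k * (q k - α) = (q k - α)^2 + α * (q k - α) := by
        intro k; ring
      rw [Finset.sum_congr rfl (fun k _ => h1 k), Finset.sum_add_distrib, ← Finset.mul_sum, hsumu,
        mul_zero, add_zero, hn2_def]
    have hkey : 0 ≤ s - t * nn := by
      have h1 : ∑ k, q k * y k = s - c * n2 := by
        have h2 : ∀ k : Fin K, q k * y k = q k - c * (q k * (q k - α)) := by
          intro k; simp only [hy_def]; ring
        rw [Finset.sum_congr rfl (fun k _ => h2 k), Finset.sum_sub_distrib, ← Finset.mul_sum,
          hquad, hs_def]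
      have h3 : c * n2 = t * nn := by
        rw [hc_def, ← hnn2]; field_simp
      rw [h1, h3] at hqy
      exact hqy
    have hsq2 : t^2 * n2 ≤ s^2 := by
      have h1 : t * nn ≤ s := by linarith
      have h2 : (t*nn)^2 ≤ s^2 := by nlinarith [mul_pos htpos hnnpos]
      calc t^2 * n2 = (t*nn)^2 := by rw [← hnn2]; ring
        _ ≤ s^2 := h2
    rw [ht2] at hsq2
    rw [div_mul_eq_mul_div, div_le_iff₀ hKm1] at hsq2
    rw [sub_div' (ne_of_gt hKpos), le_div_iff₀ hKpos]
    nlinarith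

/-- A positive semidefinite matrix with trace at most `K` has determinant at most 1,
with equality only for the identity. -/
lemma aux_psd {K : ℕ} (A : Matrix (Fin K) (Fin K) ℝ) (hA : A.PosSemidef)
    (ht : A.trace ≤ K) : A.det ≤ 1 ∧ (A.det = 1 → A = 1) := by
  have hH : A.IsHermitian := hA.1
  have hdet : A.det = ∏ i, hH.eigenvalues i := by
    rw [hH.det_eq_prod_eigenvalues]
    norm_num
  have hU : (star (hH.eigenvectorUnitary : Matrix (Fin K) (Fin K) ℝ)) *
      (hH.eigenvectorUnitary : Matrix (Fin K) (Fin K) ℝ) = 1 :=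
    Unitary.coe_star_mul_self _
  have htr : A.trace = ∑ i, hH.eigenvalues i := by
    nth_rewrite 1 [hH.spectral_theorem]
    rw [Unitary.conjStarAlgAut_apply, Matrix.trace_mul_cycle, hU, Matrix.one_mul, Matrix.trace_diagonal]
    simp
  have hnn : ∀ i, 0 ≤ hH.eigenvalues i := fun i => hA.eigenvalues_nonneg i
  have hsum : ∑ i, hH.eigenvalues i ≤ K := by rw [← htr]; exact ht
  obtain ⟨h1, h2⟩ := aux_prod_le_one hH.eigenvalues hnn hsum
  refine ⟨by rw [hdet]; exact h1, ?_⟩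
  intro hd
  have hall : ∀ i, hH.eigenvalues i = 1 := h2 (by rw [← hdet]; exact hd)
  have hdiag : Matrix.diagonal (RCLike.ofReal ∘ hH.eigenvalues)
      = (1 : Matrix (Fin K) (Fin K) ℝ) := by
    rw [show RCLike.ofReal ∘ hH.eigenvalues = fun _ => (1:ℝ) from funext fun i => by
      simp [hall i]]
    exact Matrix.diagonal_one
  rw [hH.spectral_theorem, hdiag, Unitary.conjStarAlgAut_apply, Matrix.mul_one]
  exact Unitary.coe_mul_star_self _

theorem stmt3 {K J : ℕ} (hK : 1 ≤ K) (hJ : 1 ≤ J)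
    (Y : Matrix (Fin K) (Fin J) ℝ)
    (hY0 : ∀ i j, 0 ≤ Y i j) (hY1 : ∀ j, ∑ i, Y i j = 1)
    (hYrank : Y.rank = K) (hYssc : SSC Y)
    (Q : Matrix (Fin K) (Fin K) ℝ)
    (hQY0 : ∀ i j, 0 ≤ (Q * Y) i j) (hQY1 : ∀ j, ∑ i, (Q * Y) i j = 1) :
    |Q.det| ≤ 1 ∧ (|Q.det| = 1 → IsPermMatrix Q) := by
  classical
  obtain ⟨θ₁, hθ₁0, hθ₁⟩ := hYssc.1 (one_mem_socC hK)
  have hone : ∀ k : Fin K, (Y.mulVec θ₁) k = 1 := fun k => (congrFun hθ₁ k).symm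
  set r : Fin K → ℝ := fun i => ∑ k, Q i k with hr_def
  have key : ∀ (θ : Fin J → ℝ) (i : Fin K),
      ∑ k, Q i k * (Y.mulVec θ) k = ∑ j, (Q * Y) i j * θ j := by
    intro θ i
    simp only [Matrix.mulVec, dotProduct, Matrix.mul_apply, Finset.mul_sum, Finset.sum_mul]
    rw [Finset.sum_comm]
    exact Finset.sum_congr rfl fun j _ => Finset.sum_congr rfl fun k _ => by ring
  have hrow : ∀ i, 0 ≤ r i ∧ ∑ k, (Q i k)^2 ≤ (r i)^2 := by
    intro i
    apply aux_row hK
    intro y hy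
    obtain ⟨θ, hθ0, rfl⟩ := hYssc.1 hy
    rw [key θ i]
    exact Finset.sum_nonneg fun j _ => mul_nonneg (hQY0 i j) (hθ0 j)
  have h3 : ∑ k : Fin K, (Y.mulVec θ₁) k = ∑ j, θ₁ j := by
    simp only [Matrix.mulVec, dotProduct]
    rw [Finset.sum_comm]
    exact Finset.sum_congr rfl fun j _ => by rw [← Finset.sum_mul, hY1 j, one_mul]
  have hθsum : ∑ j, θ₁ j = (K:ℝ) := by rw [← h3]; simp [hone]
  have h4 : ∀ i, r i = ∑ j, (Q * Y) i j * θ₁ j := by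
    intro i
    rw [← key θ₁ i, hr_def]
    exact Finset.sum_congr rfl fun k _ => by rw [hone k, mul_one]
  have hrsum : ∑ i, r i = (K:ℝ) := by
    calc ∑ i, r i = ∑ i, ∑ j, (Q*Y) i j * θ₁ j := Finset.sum_congr rfl fun i _ => h4 i
      _ = ∑ j, ∑ i : Fin K, (Q*Y) i j * θ₁ j := Finset.sum_comm
      _ = ∑ j, θ₁ j := Finset.sum_congr rfl fun j _ => by rw [← Finset.sum_mul, hQY1 j, one_mul]
      _ = K := hθsum
  by_cases hpos : ∀ i, 0 < r i
  · -- all row sums positive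
    set M : Matrix (Fin K) (Fin K) ℝ := Matrix.diagonal (fun i => (r i)⁻¹) * Q with hM_def
    have hMentry : ∀ i k, M i k = Q i k / r i := by
      intro i k
      rw [hM_def, Matrix.diagonal_mul, div_eq_inv_mul]
    set A : Matrix (Fin K) (Fin K) ℝ := M * Mᵀ with hA_def
    have hApsd : A.PosSemidef := by
      have := Matrix.posSemidef_self_mul_conjTranspose M
      rwa [Matrix.conjTranspose_eq_transpose_of_trivial] at this
    have htraceA : A.trace = ∑ i, A i i := by simp [Matrix.trace, Matrix.diag]
    have htrace : A.trace ≤ (K:ℝ) := by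
      have h1 : ∀ i, A i i ≤ 1 := by
        intro i
        have h2 : A i i = (∑ k, (Q i k)^2) / (r i)^2 := by
          simp only [hA_def, Matrix.mul_apply, Matrix.transpose_apply, hMentry]
          rw [Finset.sum_div]
          exact Finset.sum_congr rfl fun k _ => by rw [div_mul_div_comm, ← sq, ← sq]
        rw [h2, div_le_one (pow_pos (hpos i) 2)]
        exact (hrow i).2
      calc A.trace = ∑ i, A i i := htraceA
        _ ≤ ∑ _i : Fin K, (1:ℝ) := Finset.sum_le_sum fun i _ => h1 i
        _ = K := by simp
    set P : ℝ := ∏ i, r i with hP_def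
    have hdetM : M.det = P⁻¹ * Q.det := by
      rw [hM_def, Matrix.det_mul, Matrix.det_diagonal, hP_def, ← Finset.prod_inv_distrib]
    have hdetA : A.det = M.det ^ 2 := by
      rw [hA_def, Matrix.det_mul, Matrix.det_transpose]; ring
    obtain ⟨hA1, hA2⟩ := aux_psd A hApsd htrace
    have hPpos : 0 < P := Finset.prod_pos (fun i _ => hpos i)
    obtain ⟨hPle, hPeq1⟩ := aux_prod_le_one r (fun i => (hrow i).1) (le_of_eq hrsum)
    have h6 : (P⁻¹ * Q.det)^2 ≤ 1 := by rw [← hdetM, ← hdetA]; exact hA1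
    have h7 : P⁻¹^2 * Q.det^2 ≤ 1 := by rw [← mul_pow]; exact h6
    have h8 : (0:ℝ) < P^2 := pow_pos hPpos 2
    have hdQ2 : Q.det^2 ≤ P^2 := by
      calc Q.det^2 = (P⁻¹^2 * Q.det^2) * P^2 := by field_simp
        _ ≤ 1 * P^2 := mul_le_mul_of_nonneg_right h7 (le_of_lt h8)
        _ = P^2 := one_mul _
    constructor
    · rw [← sq_le_one_iff_abs_le_one]
      nlinarith
    · intro habs
      have hQ2 : Q.det^2 = 1 := by rw [← sq_abs, habs, one_pow]
      have hPeq : P = 1 := by nlinarith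
      have hr1 : ∀ i, r i = 1 := hPeq1 hPeq
      have hMQ : M = Q := by
        ext i k; rw [hMentry, hr1 i, div_one]
      have hdetA1 : A.det = 1 := by
        rw [hdetA, hdetM, hPeq]; simpa using hQ2
      have hQQ : Q * Qᵀ = 1 := by
        have h9 := hA2 hdetA1
        rw [hA_def, hMQ] at h9
        exact h9
      have hQtQ : Qᵀ * Q = 1 := mul_eq_one_comm.1 hQQ
      have hcone : coneOf Y ⊆ coneOf Qᵀ := by
        rintro x ⟨θ, hθ0, rfl⟩
        refine ⟨(Q * Y).mulVec θ, ?_, ?_⟩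
        · intro i
          simp only [Matrix.mulVec, dotProduct]
          exact Finset.sum_nonneg fun j _ => mul_nonneg (hQY0 i j) (hθ0 j)
        · rw [Matrix.mulVec_mulVec, ← Matrix.mul_assoc, hQtQ, Matrix.one_mul]
      by_contra hnperm
      have hnpermT : ¬ IsPermMatrix Qᵀ := by
        rintro ⟨σ, hσ⟩
        apply hnperm
        refine ⟨σ⁻¹, fun i j => ?_⟩
        have h10 := hσ j i
        rw [Matrix.transpose_apply] at h10
        rw [h10]
        by_cases h : σ j = i
        · have h11 : σ⁻¹ i = j := by rw [← h]; simp
          simp [h, h11]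
        · have h11 : σ⁻¹ i ≠ j := fun hc => h (by rw [← hc]; simp)
          simpa [h] using h11
      exact hYssc.2 Qᵀ (by rw [Matrix.transpose_transpose]; exact hQQ) hnpermT hcone
  · -- some row sum is zero: determinant vanishes
    push_neg at hpos
    obtain ⟨i, hi⟩ := hpos
    have hri : r i = 0 := le_antisymm hi (hrow i).1
    have hsum0 : ∑ k, (Q i k)^2 = 0 := by
      have h2 := (hrow i).2
      rw [hri] at h2
      have h3 : (0:ℝ)^2 = 0 := by norm_num
      exact le_antisymm (by rw [← h3]; exact h2)
        (Finset.sum_nonneg fun k _ => sq_nonneg _)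
    have hq0 : ∀ k, Q i k = 0 := by
      intro k
      have := (Finset.sum_eq_zero_iff_of_nonneg (fun k _ => sq_nonneg (Q i k))).1 hsum0 k
        (Finset.mem_univ k)
      exact pow_eq_zero_iff (two_ne_zero) |>.1 this
    have hdet0 : Q.det = 0 := Matrix.det_eq_zero_of_row_eq_zero i hq0
    rw [hdet0]
    constructor
    · simp
    · intro h; simp at h
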